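/- The pseudospin expectation is periodic with period π/2 in every angle: for all γ, β ∈ ℝ^p, all integer vectors l, l′ ∈ ℤ^p, and all θ ∈ ℝ, F(γ + (π/2)·l, β + (π/2)·l′, θ) = F(γ, β, θ), where addition is componentwise. -/

import Mathlib

open Matrix Complex Real

noncomputable section

def σx : Matrix (Fin 2) (Fin 2) ℂ := !![0, 1; 1, 0]

def σz : Matrix (Fin 2) (Fin 2) ℂ := !![1, 0; 0, -1]

/-- The Bloch axis `n(θ) = cos θ · σz + sin θ · σx`. -/
def nvec (θ : ℝ) : Matrix (Fin 2) (Fin 2) ℂ :=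
  (Real.cos θ : ℂ) • σz + (Real.sin θ : ℂ) • σx

/-- `U_B(β) = exp(−2iβ·σz)`. -/
def UB (β : ℝ) : Matrix (Fin 2) (Fin 2) ℂ :=
  NormedSpace.exp ((-2 * β * Complex.I) • σz)

/-- `U_C(γ,θ) = exp(−2iγ·n(θ))`. -/
def UC (γ θ : ℝ) : Matrix (Fin 2) (Fin 2) ℂ :=
  NormedSpace.exp ((-2 * γ * Complex.I) • nvec θ)

/-- The level-`p` QAOA circuit `U(γ,β,θ) = U_B(β_p)·U_C(γ_p,θ)·⋯·U_B(β_1)·U_C(γ_1,θ)`. -/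
def Uqaoa (p : ℕ) (γ β : Fin p → ℝ) (θ : ℝ) : Matrix (Fin 2) (Fin 2) ℂ :=
  ((List.ofFn fun i : Fin p => UB (β i) * UC (γ i) θ).reverse).prod

/-- The pseudospin expectation `F(γ,β,θ) = Re tr[n(θ)·U·σz·U†]`. -/
def Fps (p : ℕ) (γ β : Fin p → ℝ) (θ : ℝ) : ℝ :=
  (Matrix.trace (nvec θ * Uqaoa p γ β θ * σz * (Uqaoa p γ β θ)ᴴ)).re

end
noncomputable section

lemma neg_one_zpow_mul_self (k : ℤ) : ((-1:ℂ))^k * ((-1:ℂ))^k = 1 := by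
  rw [← mul_zpow]; norm_num

lemma exp_pi_smul_sigma_z (k : ℤ) :
    NormedSpace.exp (((-(k:ℂ)) * (↑Real.pi) * Complex.I) • σz) = ((-1:ℂ)^k) • 1 := by
  have h1 : NormedSpace.exp ((k:ℂ) * (↑Real.pi) * Complex.I) = (-1:ℂ)^k := by
    rw [← Complex.exp_eq_exp_ℂ, mul_assoc, Complex.exp_int_mul, Complex.exp_pi_mul_I]
  have h2 : NormedSpace.exp (-((k:ℂ) * (↑Real.pi) * Complex.I)) = (-1:ℂ)^k := by
    rw [← Complex.exp_eq_exp_ℂ]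
    have : -((k:ℂ) * (↑Real.pi) * Complex.I) = ((-k : ℤ) : ℂ) * ((↑Real.pi) * Complex.I) := by
      push_cast; ring
    rw [this, Complex.exp_int_mul, Complex.exp_pi_mul_I, _root_.zpow_neg]
    exact inv_eq_of_mul_eq_one_left (neg_one_zpow_mul_self k)
  have hsm : ((-(k:ℂ)) * (↑Real.pi) * Complex.I) • σz
      = Matrix.diagonal ![(-(k:ℂ)) * (↑Real.pi) * Complex.I, (k:ℂ) * (↑Real.pi) * Complex.I] := by
    ext i j
    fin_cases i <;> fin_cases j <;> simp [σz, Matrix.diagonal] <;> ring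
  rw [hsm, Matrix.exp_diagonal]
  ext i j
  fin_cases i <;> fin_cases j <;>
    simp [Matrix.diagonal, Pi.exp_def, h1, h2, Matrix.one_apply]

/-- Rotation matrix conjugating `σz` to `nvec θ`. -/
def Rot (θ : ℝ) : Matrix (Fin 2) (Fin 2) ℂ :=
  !![(Real.cos (θ/2) : ℂ), -(Real.sin (θ/2) : ℂ); (Real.sin (θ/2) : ℂ), (Real.cos (θ/2) : ℂ)]

def Rot' (θ : ℝ) : Matrix (Fin 2) (Fin 2) ℂ :=
  !![(Real.cos (θ/2) : ℂ), (Real.sin (θ/2) : ℂ); -(Real.sin (θ/2) : ℂ), (Real.cos (θ/2) : ℂ)]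

lemma Rot_mul_Rot' (θ : ℝ) : Rot θ * Rot' θ = 1 := by
  have hp := Complex.sin_sq_add_cos_sq ((θ:ℂ)/2)
  ext i j
  fin_cases i <;> fin_cases j
  · simp [Rot, Rot', Matrix.mul_apply, Fin.sum_univ_two, Matrix.one_apply]
    linear_combination hp
  · simp [Rot, Rot', Matrix.mul_apply, Fin.sum_univ_two, Matrix.one_apply]
    ring
  · simp [Rot, Rot', Matrix.mul_apply, Fin.sum_univ_two, Matrix.one_apply]
    ring
  · simp [Rot, Rot', Matrix.mul_apply, Fin.sum_univ_two, Matrix.one_apply]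
    linear_combination hp

lemma Rot'_mul_Rot (θ : ℝ) : Rot' θ * Rot θ = 1 := by
  have hp := Complex.sin_sq_add_cos_sq ((θ:ℂ)/2)
  ext i j
  fin_cases i <;> fin_cases j
  · simp [Rot, Rot', Matrix.mul_apply, Fin.sum_univ_two, Matrix.one_apply]
    linear_combination hp
  · simp [Rot, Rot', Matrix.mul_apply, Fin.sum_univ_two, Matrix.one_apply]
    ring
  · simp [Rot, Rot', Matrix.mul_apply, Fin.sum_univ_two, Matrix.one_apply]
    ring
  · simp [Rot, Rot', Matrix.mul_apply, Fin.sum_univ_two, Matrix.one_apply]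
    linear_combination hp

def RotU (θ : ℝ) : (Matrix (Fin 2) (Fin 2) ℂ)ˣ :=
  ⟨Rot θ, Rot' θ, Rot_mul_Rot' θ, Rot'_mul_Rot θ⟩

lemma nvec_conj (θ : ℝ) : nvec θ
    = (RotU θ : Matrix (Fin 2) (Fin 2) ℂ) * σz * ((RotU θ)⁻¹ : (Matrix (Fin 2) (Fin 2) ℂ)ˣ) := by
  have h2 : 2 * ((θ:ℂ)/2) = (θ:ℂ) := by ring
  have hp := Complex.sin_sq_add_cos_sq ((θ:ℂ)/2)
  have hc := Complex.cos_two_mul ((θ:ℂ)/2)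
  have hs := Complex.sin_two_mul ((θ:ℂ)/2)
  rw [h2] at hc hs
  show nvec θ = Rot θ * σz * Rot' θ
  ext i j
  fin_cases i <;> fin_cases j
  · simp [nvec, σx, σz, Rot, Rot', Matrix.mul_apply, Fin.sum_univ_two]
    linear_combination hc + hp
  · simp [nvec, σx, σz, Rot, Rot', Matrix.mul_apply, Fin.sum_univ_two]
    linear_combination hs
  · simp [nvec, σx, σz, Rot, Rot', Matrix.mul_apply, Fin.sum_univ_two]
    linear_combination hs
  · simp [nvec, σx, σz, Rot, Rot', Matrix.mul_apply, Fin.sum_univ_two]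
    linear_combination -hc - hp

lemma exp_pi_smul_nvec (θ : ℝ) (k : ℤ) :
    NormedSpace.exp (((-(k:ℂ)) * (↑Real.pi) * Complex.I) • nvec θ) = ((-1:ℂ)^k) • 1 := by
  rw [nvec_conj θ, ← smul_mul_assoc, ← mul_smul_comm, Matrix.exp_units_conj,
    exp_pi_smul_sigma_z, mul_smul_comm, smul_mul_assoc, mul_one, Units.mul_inv]

lemma UB_shift (β : ℝ) (k : ℤ) : UB (β + Real.pi/2 * k) = ((-1:ℂ)^k) • UB β := by
  unfold UB
  have hsplit : (-2 * ((β + Real.pi/2 * k : ℝ) : ℂ) * Complex.I) • σz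
      = (-2 * (β:ℂ) * Complex.I) • σz + ((-(k:ℂ)) * (↑Real.pi) * Complex.I) • σz := by
    rw [← add_smul]; congr 1; push_cast; ring
  rw [hsplit, Matrix.exp_add_of_commute _ _
      (((Commute.refl σz).smul_left _).smul_right _),
    exp_pi_smul_sigma_z, mul_smul_comm, mul_one]

lemma UC_shift (γ θ : ℝ) (k : ℤ) : UC (γ + Real.pi/2 * k) θ = ((-1:ℂ)^k) • UC γ θ := by
  unfold UC
  have hsplit : (-2 * ((γ + Real.pi/2 * k : ℝ) : ℂ) * Complex.I) • nvec θ
      = (-2 * (γ:ℂ) * Complex.I) • nvec θ + ((-(k:ℂ)) * (↑Real.pi) * Complex.I) • nvec θ := by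
    rw [← add_smul]; congr 1; push_cast; ring
  rw [hsplit, Matrix.exp_add_of_commute _ _
      (((Commute.refl (nvec θ)).smul_left _).smul_right _),
    exp_pi_smul_nvec, mul_smul_comm, mul_one]

lemma prod_map_smul (L : List (ℂ × Matrix (Fin 2) (Fin 2) ℂ)) :
    (L.map fun x => x.1 • x.2).prod = (L.map Prod.fst).prod • (L.map Prod.snd).prod := by
  induction L with
  | nil => simp
  | cons h t ih => simp [ih, smul_mul_assoc, mul_smul_comm, smul_smul, mul_comm]

/-- The pseudospin expectation is periodic with period `π/2` in every angle. -/
theorem pseudospin_periodicity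
    (p : ℕ) (hp : 1 ≤ p) (γ β : Fin p → ℝ) (l l' : Fin p → ℤ) (θ : ℝ) :
    Fps p (fun i => γ i + (Real.pi / 2) * l i) (fun i => β i + (Real.pi / 2) * l' i) θ
      = Fps p γ β θ := by
  set c : Fin p → ℂ := fun i => (-1:ℂ)^(l' i) * (-1:ℂ)^(l i) with hc
  set C : ℂ := ∏ i, c i with hC
  have hcc : ∀ i, c i * c i = 1 := fun i => by
    rw [hc]; dsimp only
    rw [mul_mul_mul_comm, neg_one_zpow_mul_self, neg_one_zpow_mul_self, one_mul]
  have hCC : C * C = 1 := by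
    rw [hC, ← Finset.prod_mul_distrib]
    exact Finset.prod_eq_one fun i _ => hcc i
  have hstar : star C = C := by
    rw [Complex.star_def, hC, map_prod]
    refine Finset.prod_congr rfl fun i _ => ?_
    rw [hc]; dsimp only
    rw [_root_.map_mul, map_zpow₀, map_zpow₀, map_neg, _root_.map_one]
  have hU : Uqaoa p (fun i => γ i + (Real.pi / 2) * l i)
      (fun i => β i + (Real.pi / 2) * l' i) θ = C • Uqaoa p γ β θ := by
    unfold Uqaoa
    have hfn : (fun i : Fin p => UB (β i + (Real.pi / 2) * l' i)
        * UC (γ i + (Real.pi / 2) * l i) θ)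
        = fun i => c i • (UB (β i) * UC (γ i) θ) := by
      funext i
      rw [show β i + (Real.pi / 2) * l' i = β i + Real.pi/2 * (l' i) by ring,
        show γ i + (Real.pi / 2) * l i = γ i + Real.pi/2 * (l i) by ring,
        UB_shift, UC_shift, smul_mul_assoc, mul_smul_comm, smul_smul]
    rw [hfn]
    have h1 : (List.ofFn fun i : Fin p => c i • (UB (β i) * UC (γ i) θ))
        = ((List.ofFn fun i : Fin p => (c i, UB (β i) * UC (γ i) θ)).map
            fun x => x.1 • x.2) := by
      rw [List.map_ofFn]; rfl
    rw [h1, ← List.map_reverse, prod_map_smul]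
    congr 1
    · rw [List.map_reverse, List.prod_reverse, List.map_ofFn, List.prod_ofFn]
      rfl
    · rw [List.map_reverse, List.map_ofFn]
      rfl
  unfold Fps
  rw [hU, Matrix.conjTranspose_smul]
  simp only [hstar, mul_smul_comm, smul_mul_assoc, smul_smul, Matrix.trace_smul,
    smul_eq_mul, hCC, one_mul]
end
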